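/- Let H be a positive-definite Hermitian n×n complex matrix satisfying H · Hᵀ = I_n, and let S be the unique positive-semidefinite Hermitian square root of H (so S² = H). Then S also satisfies S · Sᵀ = I_n. -/

import Mathlib

open Matrix
open scoped ComplexOrder

/-- Let `H` be a positive-definite Hermitian complex matrix with `H * Hᵀ = 1`, and
let `S` be the (unique) positive-semidefinite Hermitian square root of `H`, so
`S * S = H`.  Then `S * Sᵀ = 1` as well. -/
theorem sqrt_orthogonal_of_posDef_orthogonal (n : ℕ) (H S : Matrix (Fin n) (Fin n) ℂ)
    (hH : H.PosDef) (hHt : H * Hᵀ = 1)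
    (hS : S.PosSemidef) (hSsq : S * S = H) : S * Sᵀ = 1 := by
  have hSH : Sᴴ = S := hS.1
  -- S has nonzero determinant
  have hSdet : S.det ≠ 0 := by
    intro h0
    have h : S.det * S.det = H.det := by rw [← det_mul, hSsq]
    rw [h0, mul_zero] at h
    exact hH.det_pos.ne' h.symm
  have hSinv : S * S⁻¹ = 1 := mul_nonsing_inv S hSdet.isUnit
  have hSinv' : S⁻¹ * S = 1 := nonsing_inv_mul S hSdet.isUnit
  -- S⁻¹ is positive semidefinite
  have hinvPsd : (S⁻¹).PosSemidef := by
    have h1 := hS.mul_mul_conjTranspose_same S⁻¹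
    have h2 : S⁻¹ * S * (S⁻¹)ᴴ = S⁻¹ := by
      rw [conjTranspose_nonsing_inv, hSH, hSinv', Matrix.one_mul]
    rwa [h2] at h1
  -- Sᵀ is positive semidefinite
  have htPsd : (Sᵀ).PosSemidef := hS.transpose
  -- Hᵀ = H⁻¹
  have hHtinv : H⁻¹ = Hᵀ := inv_eq_right_inv hHt
  -- (S⁻¹)² = H⁻¹ = Hᵀ = (Sᵀ)²
  have hsq : S⁻¹ ^ 2 = Sᵀ ^ 2 := by
    rw [pow_two, pow_two, ← Matrix.mul_inv_rev, hSsq, hHtinv, ← transpose_mul, hSsq]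
  -- uniqueness of psd square root
  have heq : S⁻¹ = Sᵀ := by
    open scoped MatrixOrder in exact (CFC.sq_eq_sq_iff _ _ hinvPsd.nonneg htPsd.nonneg).mp hsq
  rw [← heq, hSinv]
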